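/- With the norm ‖(x,y)‖_f = inf { ‖x−w‖ + ‖y + f w‖ + ε‖w‖ : w ∈ X } on X × Y, the canonical embedding j : Y → X × Y, j(y) = (0, y), is isometric: ‖(0,y)‖_f = ‖y‖ for all y ∈ Y. -/
import Mathlib

/-- the canonical embedding j : Y → X × Y, y ↦ (0,y), is isometric
for the norm ‖·‖_f. -/
theorem stmt_2 {X Y : Type*} [NormedAddCommGroup X] [NormedSpace ℝ X]
    [NormedAddCommGroup Y] [NormedSpace ℝ Y]
    (ε : ℝ) (hε0 : 0 < ε) (hε1 : ε < 1)
    (f : X →ₗ[ℝ] Y) (hf1 : ∀ x, ‖f x‖ ≤ ‖x‖)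
    (hf2 : ∀ x, (1 - ε) * ‖x‖ ≤ ‖f x‖)
    (N : X × Y → ℝ)
    (hN : N = fun p => sInf {r : ℝ | ∃ w : X, r = ‖p.1 - w‖ + ‖p.2 + f w‖ + ε * ‖w‖}) :
    ∀ y : Y, N (0, y) = ‖y‖ := by
  intro y
  subst hN
  apply le_antisymm
  · apply csInf_le
    · refine ⟨‖y‖, ?_⟩
      rintro r ⟨w, rfl⟩
      have h1 : ‖y‖ ≤ ‖y + f w‖ + ‖f w‖ := by
        calc ‖y‖ = ‖(y + f w) + (-(f w))‖ := by simp
          _ ≤ ‖y + f w‖ + ‖-(f w)‖ := norm_add_le _ _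
          _ = ‖y + f w‖ + ‖f w‖ := by rw [norm_neg]
      have h2 : ‖f w‖ ≤ ‖w‖ := hf1 w
      have h3 : ‖(0 : X) - w‖ = ‖w‖ := by simp
      nlinarith [norm_nonneg w]
    · exact ⟨0, by simp⟩
  · refine le_csInf ⟨‖y‖, ⟨0, by simp⟩⟩ ?_
    rintro r ⟨w, rfl⟩
    have h1 : ‖y‖ ≤ ‖y + f w‖ + ‖f w‖ := by
      calc ‖y‖ = ‖(y + f w) + (-(f w))‖ := by simp
        _ ≤ ‖y + f w‖ + ‖-(f w)‖ := norm_add_le _ _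
        _ = ‖y + f w‖ + ‖f w‖ := by rw [norm_neg]
    have h2 : ‖f w‖ ≤ ‖w‖ := hf1 w
    have h3 : ‖(0 : X) - w‖ = ‖w‖ := by simp
    nlinarith [norm_nonneg w]
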